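/- Let N ≥ 1, κ₁, κ₂ > 0, C ≥ 0, T > 0. Let f : (ℝ²)^N → (ℝ²)^N satisfy |f(X) − f(X')|_∞ ≤ κ₂ |X − X'|_∞ for all X, X'. Let Z : [0,T] → (ℝ²)^N be C¹ with Z'(t) = f(Z(t)); let I₁,…,I_N : [0,T] → [0,∞) be C¹ with I_j'(t) ≤ 2κ₁ I_j(t) for all t; and let B : [0,T] → (ℝ²)^N be C¹ with |B'(t) − f(B(t))|_∞ ≤ C Σ_{j=1}^N √(I_j(t)) for all t and B(0) = Z(0). Then for all t ∈ [0,T]: |B(t) − Z(t)|_∞ ≤ (C/κ₁) (Σ_{j=1}^N √(I_j(0))) e^{(κ₁+κ₂) t}. -/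

import Mathlib

/-- quantitative core of the confinement argument. If the moments of
inertia satisfy `Iⱼ' ≤ 2κ₁ Iⱼ`, the blob-center vector `B` is an approximate solution of
`B' = f(B)` with defect `C ∑ⱼ √Iⱼ`, `Z` is an exact solution, `f` is `κ₂`-Lipschitz and
`B(0) = Z(0)`, then `|B(t) − Z(t)|_∞ ≤ (C/κ₁) (∑ⱼ √Iⱼ(0)) e^{(κ₁+κ₂)t}` on `[0,T]`.
Here `(ℝ²)^N` is modelled as `Fin N → ℂ`, whose norm is the sup of the Euclidean norms
of the `N` components. -/
theorem center_trajectory_gronwall_bound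
    (N : ℕ) (hN : 1 ≤ N) (κ₁ κ₂ C T : ℝ)
    (hκ₁ : 0 < κ₁) (hκ₂ : 0 < κ₂) (hC : 0 ≤ C) (hT : 0 < T)
    (f : (Fin N → ℂ) → (Fin N → ℂ))
    (hf : ∀ X X' : Fin N → ℂ, ‖f X - f X'‖ ≤ κ₂ * ‖X - X'‖)
    (Z : ℝ → Fin N → ℂ)
    (hZ : ∀ t ∈ Set.Icc 0 T, HasDerivAt Z (f (Z t)) t)
    (I : Fin N → ℝ → ℝ) (I' : Fin N → ℝ → ℝ)
    (hInn : ∀ j, ∀ t ∈ Set.Icc 0 T, 0 ≤ I j t)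
    (hI : ∀ j, ∀ t ∈ Set.Icc 0 T, HasDerivAt (I j) (I' j t) t)
    (hI' : ∀ j, ∀ t ∈ Set.Icc 0 T, I' j t ≤ 2 * κ₁ * I j t)
    (B : ℝ → Fin N → ℂ) (B' : ℝ → Fin N → ℂ)
    (hB : ∀ t ∈ Set.Icc 0 T, HasDerivAt B (B' t) t)
    (hB' : ∀ t ∈ Set.Icc 0 T, ‖B' t - f (B t)‖ ≤ C * ∑ j, Real.sqrt (I j t))
    (hB0 : B 0 = Z 0) :
    ∀ t ∈ Set.Icc 0 T,
      ‖B t - Z t‖ ≤ C / κ₁ * (∑ j, Real.sqrt (I j 0)) * Real.exp ((κ₁ + κ₂) * t) := by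

  set S := ∑ j, Real.sqrt (I j 0) with hS
  have hS0 : 0 ≤ S := Finset.sum_nonneg fun j _ => Real.sqrt_nonneg _
  -- Step 1: √(I j t) ≤ √(I j 0) * exp (κ₁ t)
  have key : ∀ j, ∀ t ∈ Set.Icc (0:ℝ) T,
      Real.sqrt (I j t) ≤ Real.sqrt (I j 0) * Real.exp (κ₁ * t) := by
    intro j t ht
    have hanti : AntitoneOn (fun s => I j s * Real.exp (-(2*κ₁)*s)) (Set.Icc 0 T) := by
      have hder : ∀ s ∈ Set.Icc (0:ℝ) T, HasDerivAt (fun s => I j s * Real.exp (-(2*κ₁)*s))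
          (I' j s * Real.exp (-(2*κ₁)*s) + I j s * (Real.exp (-(2*κ₁)*s) * (-(2*κ₁)))) s := by
        intro s hs
        have h := (hI j s hs).mul (((hasDerivAt_id s).const_mul (-(2*κ₁))).exp)
        simpa [Pi.mul_def] using h
      apply antitoneOn_of_deriv_nonpos (convex_Icc 0 T)
      · exact fun s hs => (hder s hs).continuousAt.continuousWithinAt
      · intro s hs
        rw [interior_Icc] at hs
        exact (hder s (Set.Ioo_subset_Icc_self hs)).differentiableAt.differentiableWithinAt
      · intro s hs
        rw [interior_Icc] at hs
        have hs' := Set.Ioo_subset_Icc_self hs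
        rw [(hder s hs').deriv]
        have h1 : I' j s * Real.exp (-(2*κ₁)*s) + I j s * (Real.exp (-(2*κ₁)*s) * (-(2*κ₁)))
            = (I' j s - 2*κ₁ * I j s) * Real.exp (-(2*κ₁)*s) := by ring
        rw [h1]
        apply mul_nonpos_of_nonpos_of_nonneg
        · have := hI' j s hs'
          linarith
        · exact (Real.exp_pos _).le
    have hg : I j t * Real.exp (-(2*κ₁)*t) ≤ I j 0 := by
      have := hanti (Set.left_mem_Icc.2 hT.le) ht ht.1
      simpa using this
    have hIt : I j t ≤ I j 0 * Real.exp (2*κ₁*t) := by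
      rw [← mul_le_mul_iff_of_pos_right (Real.exp_pos (-(2*κ₁)*t))]
      calc I j t * Real.exp (-(2*κ₁)*t) ≤ I j 0 := hg
        _ = I j 0 * Real.exp (2*κ₁*t) * Real.exp (-(2*κ₁)*t) := by
            rw [mul_assoc, ← Real.exp_add]; ring_nf; simp
    calc Real.sqrt (I j t) ≤ Real.sqrt (I j 0 * Real.exp (2*κ₁*t)) := Real.sqrt_le_sqrt hIt
      _ = Real.sqrt (I j 0) * Real.exp (κ₁ * t) := by
          rw [Real.sqrt_mul (hInn j 0 (Set.left_mem_Icc.2 hT.le))]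
          congr 1
          rw [show (2*κ₁*t) = (κ₁*t) + (κ₁*t) by ring, Real.exp_add,
            show Real.exp (κ₁*t) * Real.exp (κ₁*t) = (Real.exp (κ₁*t))^2 by ring,
            Real.sqrt_sq (Real.exp_pos _).le]
  -- Step 2: defect bound
  have defect : ∀ t ∈ Set.Icc (0:ℝ) T, ‖B' t - f (B t)‖ ≤ C * S * Real.exp (κ₁ * t) := by
    intro t ht
    calc ‖B' t - f (B t)‖ ≤ C * ∑ j, Real.sqrt (I j t) := hB' t ht
      _ ≤ C * ∑ j, Real.sqrt (I j 0) * Real.exp (κ₁ * t) := by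
          apply mul_le_mul_of_nonneg_left _ hC
          exact Finset.sum_le_sum fun j _ => key j t ht
      _ = C * S * Real.exp (κ₁ * t) := by rw [← Finset.sum_mul]; ring
  -- Step 3: ε-fencing
  intro t ht
  have main : ∀ ε > (0:ℝ), ‖B t - Z t‖ ≤ (C/κ₁ * S + ε) * Real.exp ((κ₁+κ₂)*t) := by
    intro ε hε
    have hBb : ∀ x : ℝ, HasDerivAt (fun s => (C/κ₁ * S + ε) * Real.exp ((κ₁+κ₂)*s))
        ((C/κ₁ * S + ε) * (Real.exp ((κ₁+κ₂)*x) * (κ₁+κ₂))) x :=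
      fun x => by simpa using (((hasDerivAt_id x).const_mul (κ₁+κ₂)).exp).const_mul (C/κ₁ * S + ε)
    have := image_norm_le_of_norm_deriv_right_lt_deriv_boundary
      (f := fun s => B s - Z s) (f' := fun s => B' s - f (Z s))
      (a := 0) (b := T)
      (fun s hs => (((hB s hs).sub (hZ s hs)).continuousAt).continuousWithinAt)
      (fun x hx => ((hB x (Set.Ico_subset_Icc_self hx)).sub
        (hZ x (Set.Ico_subset_Icc_self hx))).hasDerivWithinAt)
      (B := fun s => (C/κ₁ * S + ε) * Real.exp ((κ₁+κ₂)*s))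
      (B' := fun x => (C/κ₁ * S + ε) * (Real.exp ((κ₁+κ₂)*x) * (κ₁+κ₂)))
      ?ha hBb ?bound ht
    · exact this
    · simp only [hB0, sub_self, norm_zero, mul_comm]
      positivity
    · intro x hx heq
      have hx' := Set.Ico_subset_Icc_self hx
      have h1 : ‖B' x - f (Z x)‖ ≤ ‖B' x - f (B x)‖ + ‖f (B x) - f (Z x)‖ := by
        have : B' x - f (Z x) = (B' x - f (B x)) + (f (B x) - f (Z x)) := by abel
        rw [this]; exact norm_add_le _ _
      have h2 : ‖f (B x) - f (Z x)‖ ≤ κ₂ * ‖B x - Z x‖ := hf _ _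
      have h3 : ‖B' x - f (Z x)‖ ≤ C * S * Real.exp (κ₁ * x)
          + κ₂ * ((C/κ₁ * S + ε) * Real.exp ((κ₁+κ₂)*x)) := by
        rw [← heq]
        calc ‖B' x - f (Z x)‖ ≤ ‖B' x - f (B x)‖ + ‖f (B x) - f (Z x)‖ := h1
          _ ≤ C * S * Real.exp (κ₁ * x) + κ₂ * ‖B x - Z x‖ :=
            add_le_add (defect x hx') h2
      refine lt_of_le_of_lt h3 ?_
      have hE : Real.exp (κ₁ * x) ≤ Real.exp ((κ₁+κ₂)*x) := by
        apply Real.exp_le_exp.2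
        nlinarith [hx.1, hκ₂.le]
      have hCS : C * S * Real.exp (κ₁ * x) ≤ C * S * Real.exp ((κ₁+κ₂)*x) :=
        mul_le_mul_of_nonneg_left hE (by positivity)
      have hne : κ₁ ≠ 0 := hκ₁.ne'
      have hkey : (C/κ₁ * S + ε) * (Real.exp ((κ₁+κ₂)*x) * (κ₁+κ₂))
          = C * S * Real.exp ((κ₁+κ₂)*x) + κ₁ * ε * Real.exp ((κ₁+κ₂)*x)
            + κ₂ * ((C/κ₁ * S + ε) * Real.exp ((κ₁+κ₂)*x)) := by
        field_simp
      rw [hkey]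
      have hpos : 0 < κ₁ * ε * Real.exp ((κ₁+κ₂)*x) := by positivity
      linarith
  -- take ε → 0
  have hEpos : 0 < Real.exp ((κ₁+κ₂)*t) := Real.exp_pos _
  refine le_of_forall_pos_le_add fun ε' hε' => ?_
  have := main (ε' / Real.exp ((κ₁+κ₂)*t)) (by positivity)
  calc ‖B t - Z t‖ ≤ (C/κ₁ * S + ε' / Real.exp ((κ₁+κ₂)*t)) * Real.exp ((κ₁+κ₂)*t) := this
    _ = C/κ₁ * S * Real.exp ((κ₁+κ₂)*t) + ε' := by field_simp
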